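/- Let n ≥ 2 and let σ be a sign string with 2 ≤ |σ| ≤ n. Then the closure of L_σ in ℝⁿ equals L_σ ∪ ⋃ L_τ, where the union is over all sign strings τ with |τ| > |σ| (equivalently, with |σ| < |τ| ≤ n). In particular, for any m with 2 ≤ m ≤ n, the closures of L_{σ^m} and of L_{−σ^m} intersect exactly in ⋃_{|τ| > m} L_τ. -/

import Mathlib

/-- `t(x)`: the minimum of `x k - x k'` over paper-odd indices `k` and paper-even
indices `k'` (here `k : Fin n` corresponds to the paper index `k.val + 1`). -/
noncomputable def tmin (n : ℕ) (x : Fin n → ℝ) : ℝ :=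
  sInf {d : ℝ | ∃ k k' : Fin n, Odd (k.val + 1) ∧ Even (k'.val + 1) ∧ d = x k - x k'}

/-- A sign string of length `m` (values `±1`, alternating), 0-indexed: `s i` is the
paper's `σ(i+1)`. -/
def IsSignString (m : ℕ) (s : ℕ → ℝ) : Prop :=
  2 ≤ m ∧ (∀ j < m, s j = 1 ∨ s j = -1) ∧ ∀ j, j + 1 < m → s (j + 1) = - s j

/-- The set `L^n_σ` of level points of type `σ` in `ℝⁿ`. -/
def Lsigma (n m : ℕ) (s : ℕ → ℝ) : Set (Fin n → ℝ) :=
  {x | tmin n x = 0 ∧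
    ∃ e : ℝ, (∃ k : Fin n, Odd (k.val + 1) ∧ x k = e) ∧
      (∃ k : Fin n, Even (k.val + 1) ∧ x k = e) ∧
      ∃ J : Fin m → Set (Fin n),
        (∀ j, (J j).Nonempty) ∧
        (∀ j, ∀ a ∈ J j, ∀ c ∈ J j, ∀ b : Fin n, a ≤ b → b ≤ c → b ∈ J j) ∧
        (∀ j j' : Fin m, j < j' → ∀ k ∈ J j, ∀ k' ∈ J j', k < k') ∧
        (⋃ j, J j) = Set.univ ∧
        (∀ j : Fin m, (∃ k ∈ J j, x k = e) ∧
          ∀ k ∈ J j, x k = e → ((-1 : ℝ) ^ (k.val + 1) = s j.val))}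

/-- Levelness with value `e`. -/
def IsLevel (n : ℕ) (x : Fin n → ℝ) (e : ℝ) : Prop :=
  (∀ k : Fin n, Odd (k.val + 1) → e ≤ x k) ∧ (∀ k : Fin n, Even (k.val + 1) → x k ≤ e) ∧
  (∃ k : Fin n, Odd (k.val + 1) ∧ x k = e) ∧ (∃ k : Fin n, Even (k.val + 1) ∧ x k = e)

lemma level_unique {n : ℕ} {x : Fin n → ℝ} {e e' : ℝ}
    (h : IsLevel n x e) (h' : IsLevel n x e') : e = e' := by
  obtain ⟨k, hk, hke⟩ := h'.2.2.1
  obtain ⟨k', hk', hke'⟩ := h.2.2.1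
  have h1 : e ≤ e' := hke ▸ h.1 k hk
  have h2 : e' ≤ e := hke' ▸ h'.1 k' hk'
  linarith

private lemma tmin_set_finite (n : ℕ) (x : Fin n → ℝ) :
    {d : ℝ | ∃ k k' : Fin n, Odd (k.val + 1) ∧ Even (k'.val + 1) ∧ d = x k - x k'}.Finite := by
  apply Set.Finite.subset (Set.finite_range (fun p : Fin n × Fin n => x p.1 - x p.2))
  rintro d ⟨k, k', _, _, rfl⟩
  exact ⟨(k, k'), rfl⟩

lemma tmin_eq_zero_of_level {n : ℕ} {x : Fin n → ℝ} {e : ℝ}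
    (h : IsLevel n x e) : tmin n x = 0 := by
  obtain ⟨h1, h2, ⟨k1, hk1, hk1e⟩, ⟨k2, hk2, hk2e⟩⟩ := h
  have hmem : (0 : ℝ) ∈ {d : ℝ | ∃ k k' : Fin n, Odd (k.val + 1) ∧ Even (k'.val + 1) ∧ d = x k - x k'} :=
    ⟨k1, k2, hk1, hk2, by rw [hk1e, hk2e]; ring⟩
  refine le_antisymm (csInf_le (tmin_set_finite n x).bddBelow hmem) (le_csInf ⟨0, hmem⟩ ?_)
  rintro d ⟨k, k', hk, hk', rfl⟩
  have := h1 k hk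
  have := h2 k' hk'
  linarith

lemma level_of_tmin {n : ℕ} {x : Fin n → ℝ} {e : ℝ} (ht : tmin n x = 0)
    (h1 : ∃ k : Fin n, Odd (k.val + 1) ∧ x k = e)
    (h2 : ∃ k : Fin n, Even (k.val + 1) ∧ x k = e) : IsLevel n x e := by
  obtain ⟨k1, hk1, hk1e⟩ := h1
  obtain ⟨k2, hk2, hk2e⟩ := h2
  refine ⟨?_, ?_, ⟨k1, hk1, hk1e⟩, ⟨k2, hk2, hk2e⟩⟩
  · intro k hk
    have hd : x k - x k2 ∈ {d : ℝ | ∃ k k' : Fin n, Odd (k.val + 1) ∧ Even (k'.val + 1) ∧ d = x k - x k'} :=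
      ⟨k, k2, hk, hk2, rfl⟩
    have := csInf_le (tmin_set_finite n x).bddBelow hd
    rw [show sInf {d : ℝ | ∃ k k' : Fin n, Odd (k.val + 1) ∧ Even (k'.val + 1) ∧ d = x k - x k'} = tmin n x from rfl, ht] at this
    rw [hk2e] at this; linarith
  · intro k hk
    have hd : x k1 - x k ∈ {d : ℝ | ∃ k k' : Fin n, Odd (k.val + 1) ∧ Even (k'.val + 1) ∧ d = x k - x k'} :=
      ⟨k1, k, hk1, hk, rfl⟩
    have := csInf_le (tmin_set_finite n x).bddBelow hd
    rw [show sInf {d : ℝ | ∃ k k' : Fin n, Odd (k.val + 1) ∧ Even (k'.val + 1) ∧ d = x k - x k'} = tmin n x from rfl, ht] at this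
    rw [hk1e] at this; linarith

lemma isClosed_level (n : ℕ) : IsClosed {x : Fin n → ℝ | ∃ e, IsLevel n x e} := by
  have heq : {x : Fin n → ℝ | ∃ e, IsLevel n x e} =
      {x : Fin n → ℝ | ∀ k k' : Fin n, Odd (k.val + 1) → Even (k'.val + 1) → x k' ≤ x k} ∩
      ⋃ k : Fin n, ⋃ k' : Fin n,
        {x : Fin n → ℝ | Odd (k.val + 1) ∧ Even (k'.val + 1) ∧ x k = x k'} := by
    ext x
    constructor
    · rintro ⟨e, h1, h2, ⟨k1, hk1, hk1e⟩, ⟨k2, hk2, hk2e⟩⟩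
      refine ⟨fun k k' hk hk' => le_trans (h2 k' hk') (h1 k hk), ?_⟩
      exact Set.mem_iUnion.2 ⟨k1, Set.mem_iUnion.2 ⟨k2, hk1, hk2, by rw [hk1e, hk2e]⟩⟩
    · rintro ⟨h1, h2⟩
      obtain ⟨k1, hk2'⟩ := Set.mem_iUnion.1 h2
      obtain ⟨k2, hk1, hk2, he⟩ := Set.mem_iUnion.1 hk2'
      refine ⟨x k1, fun k hk => ?_, fun k hk => ?_, ⟨k1, hk1, rfl⟩, ⟨k2, hk2, he.symm⟩⟩
      · rw [he]; exact h1 k k2 hk hk2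
      · exact h1 k1 k hk1 hk
  rw [heq]
  apply IsClosed.inter
  · have : {x : Fin n → ℝ | ∀ k k' : Fin n, Odd (k.val + 1) → Even (k'.val + 1) → x k' ≤ x k} =
        ⋂ k : Fin n, ⋂ k' : Fin n, {x : Fin n → ℝ | Odd (k.val + 1) → Even (k'.val + 1) → x k' ≤ x k} := by
      ext x; simp [Set.mem_iInter]
    rw [this]
    refine isClosed_iInter fun k => isClosed_iInter fun k' => ?_
    by_cases hk : Odd (k.val + 1)
    · by_cases hk' : Even (k'.val + 1)
      · have : {x : Fin n → ℝ | Odd (k.val + 1) → Even (k'.val + 1) → x k' ≤ x k} =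
            {x : Fin n → ℝ | x k' ≤ x k} := by ext x; simp [hk, hk']
        rw [this]; exact isClosed_le (continuous_apply k') (continuous_apply k)
      · have : {x : Fin n → ℝ | Odd (k.val + 1) → Even (k'.val + 1) → x k' ≤ x k} = Set.univ := by
          ext x; simp [hk']
        rw [this]; exact isClosed_univ
    · have : {x : Fin n → ℝ | Odd (k.val + 1) → Even (k'.val + 1) → x k' ≤ x k} = Set.univ := by
        ext x; simp [hk]
      rw [this]; exact isClosed_univ
  · refine isClosed_iUnion_of_finite fun k => isClosed_iUnion_of_finite fun k' => ?_
    by_cases hk : Odd (k.val + 1) ∧ Even (k'.val + 1)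
    · have : {x : Fin n → ℝ | Odd (k.val + 1) ∧ Even (k'.val + 1) ∧ x k = x k'} =
          {x : Fin n → ℝ | x k = x k'} := by ext x; simp [hk.1, hk.2]
      rw [this]; exact isClosed_eq (continuous_apply k) (continuous_apply k')
    · have : {x : Fin n → ℝ | Odd (k.val + 1) ∧ Even (k'.val + 1) ∧ x k = x k'} = ∅ := by
        ext x; simp only [Set.mem_setOf_eq, Set.mem_empty_iff_false, iff_false]
        rintro ⟨h1, h2, _⟩; exact hk ⟨h1, h2⟩
      rw [this]; exact isClosed_empty

lemma exists_level_of_mem {n m : ℕ} {s : ℕ → ℝ} {x : Fin n → ℝ}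
    (hx : x ∈ Lsigma n m s) : ∃ e : ℝ, IsLevel n x e := by
  obtain ⟨ht, e, h1, h2, _⟩ := hx
  exact ⟨e, level_of_tmin ht h1 h2⟩

/-- An alternating chain of length `r` of coordinates equal to `e`, starting with
sign `v`: `(-1)^(c i + 1) = v * (-1)^i`. -/
def AltC (n : ℕ) (x : Fin n → ℝ) (e v : ℝ) (r : ℕ) : Prop :=
  ∃ c : Fin r → Fin n, StrictMono c ∧
    ∀ i : Fin r, x (c i) = e ∧ ((-1 : ℝ)) ^ ((c i).val + 1) = v * (-1) ^ (i.val)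

lemma altc_mono {n : ℕ} {x : Fin n → ℝ} {e v : ℝ} {r r' : ℕ}
    (h : AltC n x e v r) (hr : r' ≤ r) : AltC n x e v r' := by
  obtain ⟨c, hc, hprop⟩ := h
  refine ⟨fun i => c (Fin.castLE hr i), fun a b hab => hc ?_, fun i => hprop _⟩
  rw [Fin.lt_def] at hab ⊢
  exact hab

lemma altc_le {n : ℕ} {x : Fin n → ℝ} {e v : ℝ} {r : ℕ} (h : AltC n x e v r) : r ≤ n := by
  obtain ⟨c, hc, _⟩ := h
  simpa using Fintype.card_le_of_injective c hc.injective

/-- Adjacent increase implies strict monotonicity, for `Fin`-indexed maps. -/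
lemma strictMono_of_adj {r : ℕ} {α : Type*} [Preorder α] {f : Fin r → α}
    (h : ∀ (i : ℕ) (hi : i + 1 < r), f ⟨i, by omega⟩ < f ⟨i + 1, hi⟩) : StrictMono f := by
  have key : ∀ d a (ha : a + d < r), 0 < d → f ⟨a, by omega⟩ < f ⟨a + d, ha⟩ := by
    intro d
    induction d with
    | zero => intro a ha h0; omega
    | succ d ih =>
      intro a ha _
      rcases Nat.eq_zero_or_pos d with hd | hd
      · subst hd; exact h a ha
      · exact lt_trans (ih a (by omega) hd)
          (by have := h (a + d) (by omega); exact this)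
  intro a b hab
  have h1 : f ⟨a.val, by omega⟩ < f ⟨a.val + (b.val - a.val), by omega⟩ :=
    key _ _ (by omega) (by omega)
  have hb : (⟨a.val + (b.val - a.val), by omega⟩ : Fin r) = b := by
    ext; simp only [Fin.val_mk]; omega
  have ha : (⟨a.val, by omega⟩ : Fin r) = a := by
    ext; simp only [Fin.val_mk]
  rwa [ha, hb] at h1

lemma sign_formula {m : ℕ} {s : ℕ → ℝ} (hs : IsSignString m s) :
    ∀ j, j < m → s j = s 0 * (-1) ^ j := by
  intro j
  induction j with
  | zero => intro _; simp
  | succ j ih =>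
    intro hj
    rw [hs.2.2 j hj, ih (by omega)]
    ring

lemma sign_vals {m : ℕ} {s : ℕ → ℝ} (hs : IsSignString m s) :
    s 0 = 1 ∨ s 0 = -1 := hs.2.1 0 (by have := hs.1; omega)

lemma signStr_ne_zero {m : ℕ} {s : ℕ → ℝ} (hs : IsSignString m s) : s 0 ≠ 0 := by
  rcases sign_vals hs with h | h <;> rw [h] <;> norm_num

/-- FWD: membership in `Lsigma` yields alternating-chain data. -/
lemma fwd {n m : ℕ} {s : ℕ → ℝ} {x : Fin n → ℝ}
    (hs : IsSignString m s) (hx : x ∈ Lsigma n m s) :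
    ∃ e : ℝ, IsLevel n x e ∧ AltC n x e (s 0) m ∧
      ¬ AltC n x e (s 0) (m + 1) ∧ ¬ AltC n x e (-(s 0)) m := by
  obtain ⟨ht, e, he1, he2, J, hJne, hJconv, hJord, hJcov, hJlev⟩ := hx
  have hlev := level_of_tmin ht he1 he2
  have hm2 : 2 ≤ m := hs.1
  have hm0 : 0 < m := by omega
  -- representatives
  choose c hcJ hce using fun j : Fin m => (hJlev j).1
  have hcpar : ∀ j : Fin m, (-1 : ℝ) ^ ((c j).val + 1) = s 0 * (-1) ^ (j.val) := fun j => by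
    rw [(hJlev j).2 (c j) (hcJ j) (hce j)]
    exact sign_formula hs j.val j.isLt
  have hcmono : StrictMono c := fun a b hab => hJord a b hab (c a) (hcJ a) (c b) (hcJ b)
  have hA : AltC n x e (s 0) m := ⟨c, hcmono, fun i => ⟨hce i, hcpar i⟩⟩
  have hjOf : ∀ k : Fin n, ∃ j : Fin m, k ∈ J j := fun k =>
    Set.mem_iUnion.1 (hJcov ▸ Set.mem_univ k)
  have hs0 := signStr_ne_zero hs
  have hnotup : ¬ AltC n x e (s 0) (m + 1) := by
    rintro ⟨d, hd, hdp⟩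
    choose F hF using fun i => hjOf (d i)
    have hspar : ∀ i : Fin (m + 1), s (F i).val = s 0 * (-1) ^ (i.val) := fun i => by
      rw [← (hJlev (F i)).2 (d i) (hF i) (hdp i).1]
      exact (hdp i).2
    have hFadj : ∀ (i : ℕ) (hi : i + 1 < m + 1),
        F ⟨i, by omega⟩ < F ⟨i + 1, hi⟩ := by
      intro i hi
      have h1 := hspar ⟨i, by omega⟩
      have h2 := hspar ⟨i + 1, hi⟩
      simp only at h1 h2
      have hne : F ⟨i, by omega⟩ ≠ F ⟨i + 1, hi⟩ := by
        intro hEq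
        rw [hEq] at h1
        rw [h1, pow_succ] at h2
        have : s 0 * (-1 : ℝ) ^ i = 0 := by nlinarith [sq_nonneg ((-1 : ℝ) ^ i)]
        rcases mul_eq_zero.1 this with h | h
        · exact hs0 h
        · have := pow_ne_zero i (by norm_num : (-1 : ℝ) ≠ 0); exact this h
      rcases lt_trichotomy (F ⟨i, by omega⟩) (F ⟨i + 1, hi⟩) with h | h | h
      · exact h
      · exact absurd h hne
      · have := hJord _ _ h _ (hF ⟨i + 1, hi⟩) _ (hF ⟨i, by omega⟩)
        have hd2 : d ⟨i, by omega⟩ < d ⟨i + 1, hi⟩ := hd (Fin.mk_lt_mk.2 (by omega))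
        exact absurd hd2 (not_lt.2 (le_of_lt this))
    have := Fintype.card_le_of_injective F (strictMono_of_adj hFadj).injective
    simp at this
  refine ⟨e, hlev, hA, hnotup, ?_⟩
  rintro ⟨d, hd, hdp⟩
  obtain ⟨j0, hj0⟩ := hjOf (d ⟨0, by omega⟩)
  have hsj0 : s j0.val = -(s 0) := by
    rw [← (hJlev j0).2 (d ⟨0, by omega⟩) hj0 (hdp ⟨0, by omega⟩).1]
    have := (hdp ⟨0, by omega⟩).2
    simpa using this
  have hj0pos : (⟨0, hm0⟩ : Fin m) < j0 := by
    rcases Nat.eq_zero_or_pos j0.val with h | h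
    · exfalso
      have : s j0.val = s 0 := by rw [h]
      rw [this] at hsj0
      apply hs0; linarith
    · rw [Fin.lt_def]; exact h
  have hk0lt : c ⟨0, hm0⟩ < d ⟨0, by omega⟩ :=
    hJord _ _ hj0pos _ (hcJ ⟨0, hm0⟩) _ hj0
  apply hnotup
  refine ⟨fun i => if h : i.val = 0 then c ⟨0, hm0⟩ else d ⟨i.val - 1, by omega⟩, ?_, ?_⟩
  · apply strictMono_of_adj
    intro i hi
    rcases Nat.eq_zero_or_pos i with h0 | h0
    · subst h0
      simpa using hk0lt
    · have h1 : ¬ (i = 0) := by omega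
      have h2 : ¬ (i + 1 = 0) := by omega
      simp only [h1, h2, dif_neg, not_false_iff]
      exact hd (Fin.mk_lt_mk.2 (by omega))
  · intro i
    rcases Nat.eq_zero_or_pos i.val with h0 | h0
    · have hi0 : (i : Fin (m+1)).val = 0 := h0
      simp only [hi0, dif_pos]
      exact ⟨hce _, by rw [hcpar ⟨0, hm0⟩]⟩
    · have h1 : ¬ (i.val = 0) := by omega
      simp only [h1, dif_neg, not_false_iff]
      refine ⟨(hdp ⟨i.val - 1, by omega⟩).1, ?_⟩
      rw [(hdp ⟨i.val - 1, by omega⟩).2]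
      have hp : (-1 : ℝ) ^ (i.val) = (-1) ^ (i.val - 1) * (-1) := by
        rw [← pow_succ]
        congr 1
        omega
      rw [Fin.val_mk, hp]
      ring

/-- Bounded alternating chains: all elements `≤ k`. -/
def AltB (n : ℕ) (x : Fin n → ℝ) (e p0 : ℝ) (k : Fin n) (r : ℕ) : Prop :=
  ∃ c : Fin r → Fin n, StrictMono c ∧
    ∀ i : Fin r, x (c i) = e ∧ c i ≤ k ∧ ((-1 : ℝ)) ^ ((c i).val + 1) = p0 * (-1) ^ (i.val)

open Classical in
noncomputable def rho (n : ℕ) (x : Fin n → ℝ) (e p0 : ℝ) (k : Fin n) : ℕ :=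
  Nat.findGreatest (AltB n x e p0 k) n

lemma altb_le {n : ℕ} {x : Fin n → ℝ} {e p0 : ℝ} {k : Fin n} {r : ℕ}
    (h : AltB n x e p0 k r) : r ≤ n := by
  obtain ⟨c, hc, _⟩ := h
  simpa using Fintype.card_le_of_injective c hc.injective

section rhoLemmas

variable {n : ℕ} {x : Fin n → ℝ} {e p0 : ℝ} {k0 : Fin n}
variable (hk0 : x k0 = e) (hk0min : ∀ k, x k = e → k0 ≤ k)
variable (hp0 : ((-1 : ℝ)) ^ (k0.val + 1) = p0)

include hk0 hk0min hp0 in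
lemma rho_pos {k : Fin n} (hk : x k = e) : 1 ≤ rho n x e p0 k := by
  classical
  apply Nat.le_findGreatest (by have := k.pos; omega)
  refine ⟨fun _ => k0, fun a b hab => absurd hab (by rw [Fin.lt_def]; omega), fun i => ?_⟩
  refine ⟨hk0, hk0min k hk, ?_⟩
  have : i.val = 0 := by omega
  rw [this, hp0, pow_zero, mul_one]

include hk0 hk0min hp0 in
lemma rho_spec {k : Fin n} (hk : x k = e) : AltB n x e p0 k (rho n x e p0 k) := by
  classical
  apply Nat.findGreatest_spec (m := 1) (by have := k.pos; omega)
  refine ⟨fun _ => k0, fun a b hab => absurd hab (by rw [Fin.lt_def]; omega), fun i => ?_⟩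
  refine ⟨hk0, hk0min k hk, ?_⟩
  have : i.val = 0 := by omega
  rw [this, hp0, pow_zero, mul_one]

lemma rho_max {k : Fin n} : ¬ AltB n x e p0 k (rho n x e p0 k + 1) := by
  classical
  intro h
  exact Nat.findGreatest_is_greatest (lt_add_one _) (altb_le h) h

lemma rho_mono {k k' : Fin n} (hkk : k ≤ k') : rho n x e p0 k ≤ rho n x e p0 k' := by
  classical
  rcases Nat.eq_zero_or_pos (rho n x e p0 k) with h0 | hpos
  · omega
  · have hP : AltB n x e p0 k (rho n x e p0 k) := by
      unfold rho at hpos ⊢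
      exact (Nat.findGreatest_eq_iff.1 rfl).2.1 (by omega)
    obtain ⟨c, hc, hprop⟩ := hP
    have hP' : AltB n x e p0 k' (rho n x e p0 k) :=
      ⟨c, hc, fun i => ⟨(hprop i).1, le_trans (hprop i).2.1 hkk, (hprop i).2.2⟩⟩
    exact Nat.le_findGreatest (altb_le hP') hP'

lemma p0_vals (hp0 : ((-1 : ℝ)) ^ (k0.val + 1) = p0) : p0 = 1 ∨ p0 = -1 := by
  rcases neg_one_pow_eq_or ℝ (k0.val + 1) with h | h <;> rw [← hp0, h] <;> simp

include hk0 hk0min hp0 in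
lemma rho_parity {k : Fin n} (hk : x k = e) :
    ((-1 : ℝ)) ^ (k.val + 1) = p0 * (-1) ^ (rho n x e p0 k - 1) := by
  have hr1 := rho_pos hk0 hk0min hp0 hk
  set r := rho n x e p0 k with hrdef
  obtain ⟨c, hc, hprop⟩ := rho_spec hk0 hk0min hp0 hk
  by_contra hne
  set last := c ⟨r - 1, by omega⟩ with hlast
  have hlp : ((-1 : ℝ)) ^ (last.val + 1) = p0 * (-1) ^ (r - 1) := by
    have := (hprop ⟨r - 1, by omega⟩).2.2
    simpa using this
  have hklast : last < k := by
    rcases lt_or_eq_of_le (hprop ⟨r - 1, by omega⟩).2.1 with h | h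
    · exact h
    · exfalso; apply hne; rw [← h]; exact hlp
  have hcle : ∀ i : Fin r, c i ≤ last := fun i =>
    hc.monotone (show i ≤ ⟨r - 1, by omega⟩ by rw [Fin.le_def]; simp; omega)
  have hstep : ((-1 : ℝ)) ^ r = (-1) ^ (r - 1) * (-1) := by
    have h := pow_succ (-1 : ℝ) (r - 1)
    rwa [Nat.sub_add_cancel hr1] at h
  have hB : p0 * (-1 : ℝ) ^ (r - 1) = 1 ∨ p0 * (-1 : ℝ) ^ (r - 1) = -1 := by
    rcases p0_vals hp0 with h0 | h0 <;> rcases neg_one_pow_eq_or ℝ (r - 1) with h1 | h1 <;>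
      rw [h0, h1] <;> norm_num
  have hkpar : ((-1 : ℝ)) ^ (k.val + 1) = p0 * (-1) ^ r := by
    rcases neg_one_pow_eq_or ℝ (k.val + 1) with h | h <;> rcases hB with hB' | hB'
    · exact absurd (h.trans hB'.symm) hne
    · rw [h, hstep, ← mul_assoc, hB']; norm_num
    · rw [h, hstep, ← mul_assoc, hB']; norm_num
    · exact absurd (h.trans hB'.symm) hne
  apply rho_max (k := k)
  refine ⟨fun i : Fin (r + 1) => if h : i.val < r then c ⟨i.val, h⟩ else k, ?_, ?_⟩
  · apply strictMono_of_adj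
    intro i hi
    rcases Nat.lt_or_ge (i + 1) r with h1 | h1
    · simp only [dif_pos h1, dif_pos (by omega : i < r)]
      exact hc (Fin.mk_lt_mk.2 (by omega))
    · have h2 : ¬ (i + 1 < r) := by omega
      simp only [dif_pos (by omega : i < r), dif_neg h2]
      exact lt_of_le_of_lt (hcle ⟨i, by omega⟩) hklast
  · intro i
    rcases Nat.lt_or_ge i.val r with h1 | h1
    · simp only [dif_pos h1]
      exact ⟨(hprop ⟨i.val, h1⟩).1, le_of_lt (lt_of_le_of_lt (hcle ⟨i.val, h1⟩) hklast),
        (hprop ⟨i.val, h1⟩).2.2⟩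
    · have h2 : ¬ (i.val < r) := by omega
      have h3 : i.val = r := by omega
      simp only [dif_neg h2]
      exact ⟨hk, le_refl k, by rw [h3]; exact hkpar⟩

include hk0 hk0min hp0 in
lemma rho_desc {k : Fin n} (hk : x k = e) (h2 : 2 ≤ rho n x e p0 k) :
    ∃ a : Fin n, x a = e ∧ a ≤ k ∧ rho n x e p0 a = rho n x e p0 k - 1 := by
  classical
  set r := rho n x e p0 k with hrdef
  obtain ⟨c, hc, hprop⟩ := rho_spec hk0 hk0min hp0 hk
  set a := c ⟨r - 2, by omega⟩ with ha
  have hae : x a = e := (hprop _).1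
  have hak : a ≤ k := (hprop _).2.1
  have hlow : AltB n x e p0 a (r - 1) := by
    refine ⟨fun i : Fin (r - 1) => c ⟨i.val, by omega⟩, ?_, ?_⟩
    · intro u v huv
      exact hc (Fin.mk_lt_mk.2 (by rw [Fin.lt_def] at huv; omega))
    · intro i
      refine ⟨(hprop _).1, ?_, (hprop _).2.2⟩
      exact hc.monotone (show (⟨i.val, by omega⟩ : Fin r) ≤ ⟨r - 2, by omega⟩ by
        rw [Fin.le_def]; simp; omega)
  have hge : r - 1 ≤ rho n x e p0 a := Nat.le_findGreatest (altb_le hlow) hlow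
  have hle : rho n x e p0 a ≤ r := rho_mono hak
  have hne : rho n x e p0 a ≠ r := by
    intro hEq
    have hpa := rho_parity hk0 hk0min hp0 hae
    rw [hEq] at hpa
    have hpa' : ((-1 : ℝ)) ^ (a.val + 1) = p0 * (-1) ^ (r - 2) := by
      have := (hprop ⟨r - 2, by omega⟩).2.2
      simpa using this
    rw [hpa'] at hpa
    have hstep : (-1 : ℝ) ^ (r - 1) = -((-1 : ℝ) ^ (r - 2)) := by
      have : r - 1 = (r - 2) + 1 := by omega
      rw [this, pow_succ]; ring
    rw [hstep] at hpa
    have hp00 : p0 ≠ 0 := by rcases p0_vals hp0 with h | h <;> rw [h] <;> norm_num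
    have hpow : ((-1 : ℝ)) ^ (r - 2) ≠ 0 := pow_ne_zero _ (by norm_num)
    have : p0 * (-1 : ℝ) ^ (r - 2) = 0 := by linarith
    rcases mul_eq_zero.1 this with h | h
    · exact hp00 h
    · exact hpow h
  refine ⟨a, hae, hak, by omega⟩

include hk0 hk0min hp0 in
lemma rho_surj {k : Fin n} (hk : x k = e) {L : ℕ} (hL1 : 1 ≤ L) (hL2 : L ≤ rho n x e p0 k) :
    ∃ a : Fin n, x a = e ∧ a ≤ k ∧ rho n x e p0 a = L := by
  have H : ∀ r : ℕ, ∀ k : Fin n, x k = e → rho n x e p0 k = r →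
      ∀ L, 1 ≤ L → L ≤ r → ∃ a : Fin n, x a = e ∧ a ≤ k ∧ rho n x e p0 a = L := by
    intro r
    induction r using Nat.strong_induction_on with
    | _ r ih =>
      intro k hk hr L h1 h2
      rcases eq_or_lt_of_le h2 with hEq | hlt
      · exact ⟨k, hk, le_refl k, by omega⟩
      · have hr2 : 2 ≤ rho n x e p0 k := by omega
        obtain ⟨a, hae, hak, har⟩ := rho_desc hk0 hk0min hp0 hk hr2
        obtain ⟨b, hb1, hb2, hb3⟩ := ih (r - 1) (by omega) a hae (by omega) L h1 (by omega)
        exact ⟨b, hb1, le_trans hb2 hak, hb3⟩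
  exact H (rho n x e p0 k) k hk rfl L hL1 hL2

end rhoLemmas

lemma exists_canonical {n : ℕ} {x : Fin n → ℝ} {e : ℝ} (hx : IsLevel n x e) :
    ∃ M : ℕ, ∃ sg : ℕ → ℝ, IsSignString M sg ∧ x ∈ Lsigma n M sg := by
  classical
  obtain ⟨hodd, heven, ⟨k1, hk1o, hk1e⟩, ⟨k2, hk2ev, hk2e⟩⟩ := hx
  have hKne : (Finset.univ.filter fun k : Fin n => x k = e).Nonempty := ⟨k1, by simp [hk1e]⟩
  set k0 := (Finset.univ.filter fun k : Fin n => x k = e).min' hKne with hk0def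
  have hk0 : x k0 = e := by have := Finset.min'_mem _ hKne; simpa [← hk0def] using this
  have hk0min : ∀ k, x k = e → k0 ≤ k := fun k hk => Finset.min'_le _ _ (by simp [hk])
  set p0 := ((-1 : ℝ)) ^ (k0.val + 1) with hp0def
  have hp0 : ((-1 : ℝ)) ^ (k0.val + 1) = p0 := hp0def.symm
  set kM := (Finset.univ.filter fun k : Fin n => x k = e).max' hKne with hkMdef
  have hkM : x kM = e := by have := Finset.max'_mem _ hKne; simpa [← hkMdef] using this
  have hkMmax : ∀ k, x k = e → k ≤ kM := fun k hk => Finset.le_max' _ _ (by simp [hk])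
  set M := rho n x e p0 kM with hMdef
  have hrle : ∀ k, x k = e → rho n x e p0 k ≤ M := fun k hk => by
    rw [hMdef]; exact rho_mono (hkMmax k hk)
  have hrpos : ∀ k, x k = e → 1 ≤ rho n x e p0 k := fun k hk => rho_pos hk0 hk0min hp0 hk
  have hpar : ∀ k, x k = e → ((-1 : ℝ)) ^ (k.val + 1) = p0 * (-1) ^ (rho n x e p0 k - 1) :=
    fun k hk => rho_parity hk0 hk0min hp0 hk
  have hp1 : ((-1 : ℝ)) ^ (k1.val + 1) = -1 := Odd.neg_one_pow hk1o
  have hp2 : ((-1 : ℝ)) ^ (k2.val + 1) = 1 := Even.neg_one_pow hk2ev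
  have hp0pm : p0 = 1 ∨ p0 = -1 := p0_vals hp0
  have hM2 : 2 ≤ M := by
    have hne12 : ((-1 : ℝ)) ^ (k1.val + 1) ≠ ((-1 : ℝ)) ^ (k2.val + 1) := by
      rw [hp1, hp2]; norm_num
    have key : ∀ a b : Fin n, x a = e → x b = e → a ≤ b →
        ((-1 : ℝ)) ^ (a.val + 1) ≠ ((-1 : ℝ)) ^ (b.val + 1) → 2 ≤ rho n x e p0 b := by
      intro a b ha hb hle hne
      have h1 := hrpos a ha
      have h2 : rho n x e p0 a ≤ rho n x e p0 b := rho_mono hle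
      rcases eq_or_lt_of_le h2 with h | h
      · exact absurd (by rw [hpar a ha, hpar b hb, h]) hne
      · omega
    rcases le_total k1 k2 with h | h
    · exact le_trans (key k1 k2 hk1e hk2e h hne12) (hrle k2 hk2e)
    · exact le_trans (key k2 k1 hk2e hk1e h hne12.symm) (hrle k1 hk1e)
  set Cls : ℕ → Finset (Fin n) :=
    fun j => Finset.univ.filter (fun k => x k = e ∧ rho n x e p0 k = j + 1) with hClsdef
  have hClsmem : ∀ j k, k ∈ Cls j ↔ (x k = e ∧ rho n x e p0 k = j + 1) := by
    intro j k; simp [hClsdef]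
  have hClsNe : ∀ j, j + 1 ≤ M → (Cls j).Nonempty := by
    intro j hj
    obtain ⟨a, ha1, ha2, ha3⟩ := rho_surj hk0 hk0min hp0 hkM (L := j + 1) (by omega) (by omega)
    exact ⟨a, (hClsmem _ _).2 ⟨ha1, ha3⟩⟩
  have hClsEmp : ∀ j, M ≤ j → Cls j = ∅ := by
    intro j hj
    rw [Finset.eq_empty_iff_forall_notMem]
    intro k hk
    rw [hClsmem] at hk
    have := hrle k hk.1; omega
  set β : ℕ → ℕ :=
    fun j => if j = 0 then 0 else if hne : (Cls j).Nonempty then ((Cls j).min' hne).val else n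
    with hβdef
  have hβ0 : β 0 = 0 := by simp [hβdef]
  have hβne : ∀ j, j ≠ 0 → ∀ h : (Cls j).Nonempty, β j = ((Cls j).min' h).val := by
    intro j hj h; rw [hβdef]; simp only [if_neg hj, dif_pos h]
  have hβemp : ∀ j, j ≠ 0 → Cls j = ∅ → β j = n := by
    intro j hj h; rw [hβdef]
    simp only [if_neg hj]
    rw [dif_neg]
    simp [h]
  have hkey : ∀ k : Fin n, x k = e → ∀ j : ℕ, j < M →
      ((β j ≤ k.val ∧ k.val < β (j + 1)) ↔ rho n x e p0 k = j + 1) := by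
    intro k hk j hj
    constructor
    · rintro ⟨h1, h2⟩
      have hlow : j + 1 ≤ rho n x e p0 k := by
        rcases Nat.eq_zero_or_pos j with h0 | h0
        · subst h0; exact hrpos k hk
        · rcases Finset.eq_empty_or_nonempty (Cls j) with hemp | hne
          · rw [hβemp j (by omega) hemp] at h1
            exact absurd h1 (by have := k.isLt; omega)
          · rw [hβne j (by omega) hne] at h1
            have hb := Finset.min'_mem (Cls j) hne
            rw [hClsmem] at hb
            have hle : (Cls j).min' hne ≤ k := by rw [Fin.le_def]; exact h1
            have := rho_mono (n := n) (x := x) (e := e) (p0 := p0) hle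
            omega
      have hup : rho n x e p0 k ≤ j + 1 := by
        by_contra hcon
        push_neg at hcon
        obtain ⟨a, ha1, ha2, ha3⟩ := rho_surj hk0 hk0min hp0 hk (L := j + 2) (by omega) (by omega)
        rcases Nat.lt_or_ge (j + 1) M with hjM | hjM
        · have hneCls : (Cls (j + 1)).Nonempty := hClsNe (j + 1) (by omega)
          rw [hβne (j + 1) (by omega) hneCls] at h2
          have hmle : (Cls (j + 1)).min' hneCls ≤ a :=
            Finset.min'_le _ _ ((hClsmem _ _).2 ⟨ha1, ha3⟩)
          rw [Fin.le_def] at hmle ha2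
          omega
        · have := hrle k hk; omega
      omega
    · intro hρ
      constructor
      · rcases Nat.eq_zero_or_pos j with h0 | h0
        · subst h0; rw [hβ0]; omega
        · have hneCls : (Cls j).Nonempty := ⟨k, (hClsmem _ _).2 ⟨hk, hρ⟩⟩
          rw [hβne j (by omega) hneCls]
          have := Finset.min'_le (Cls j) k ((hClsmem _ _).2 ⟨hk, hρ⟩)
          rw [Fin.le_def] at this; exact this
      · rcases Nat.lt_or_ge (j + 1) M with hjM | hjM
        · have hneCls : (Cls (j + 1)).Nonempty := hClsNe (j + 1) (by omega)
          rw [hβne (j + 1) (by omega) hneCls]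
          have hb := Finset.min'_mem (Cls (j + 1)) hneCls
          rw [hClsmem] at hb
          by_contra hcon
          push_neg at hcon
          have hle : (Cls (j + 1)).min' hneCls ≤ k := by rw [Fin.le_def]; omega
          have := rho_mono (n := n) (x := x) (e := e) (p0 := p0) hle
          omega
        · rw [hβemp (j + 1) (by omega) (hClsEmp (j + 1) (by omega))]
          exact k.isLt
  have hβM : β M = n := hβemp M (by omega) (hClsEmp M (le_refl M))
  have hβsucc : ∀ j, β j ≤ β (j + 1) := by
    intro j
    rcases Nat.eq_zero_or_pos j with h0 | h0
    · subst h0; rw [hβ0]; omega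
    rcases Finset.eq_empty_or_nonempty (Cls j) with hemp | hne
    · have hemp' : Cls (j + 1) = ∅ := by
        rcases Finset.eq_empty_or_nonempty (Cls (j + 1)) with h | h
        · exact h
        · exfalso
          obtain ⟨a, ha⟩ := h
          rw [hClsmem] at ha
          obtain ⟨b, hb1, hb2, hb3⟩ :=
            rho_surj hk0 hk0min hp0 ha.1 (L := j + 1) (by omega) (by omega)
          have := (hClsmem j b).2 ⟨hb1, hb3⟩
          rw [hemp] at this
          simp at this
      rw [hβemp j (by omega) hemp, hβemp (j + 1) (by omega) hemp']
    · rcases Finset.eq_empty_or_nonempty (Cls (j + 1)) with hemp' | hne'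
      · rw [hβemp (j + 1) (by omega) hemp', hβne j (by omega) hne]
        exact le_of_lt (((Cls j).min' hne).isLt)
      · rw [hβne j (by omega) hne, hβne (j + 1) (by omega) hne']
        have ha := Finset.min'_mem (Cls (j + 1)) hne'
        rw [hClsmem] at ha
        obtain ⟨b, hb1, hb2, hb3⟩ :=
          rho_surj hk0 hk0min hp0 ha.1 (L := j + 1) (by omega) (by omega)
        have hble := Finset.min'_le (Cls j) b ((hClsmem _ _).2 ⟨hb1, hb3⟩)
        rw [Fin.le_def] at hble hb2
        omega
  have hβmono : Monotone β := monotone_nat_of_le_succ hβsucc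
  refine ⟨M, fun j => p0 * (-1) ^ j, ⟨hM2, ?_, ?_⟩, ?_⟩
  · intro j _
    simp only []
    rcases hp0pm with h | h <;> rcases neg_one_pow_eq_or ℝ j with h1 | h1 <;> rw [h, h1] <;> norm_num
  · intro j _
    simp only []
    ring
  refine ⟨tmin_eq_zero_of_level ⟨hodd, heven, ⟨k1, hk1o, hk1e⟩, ⟨k2, hk2ev, hk2e⟩⟩, e,
    ⟨k1, hk1o, hk1e⟩, ⟨k2, hk2ev, hk2e⟩,
    fun j : Fin M => {b : Fin n | β j.val ≤ b.val ∧ b.val < β (j.val + 1)}, ?_, ?_, ?_, ?_, ?_⟩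
  · intro j
    obtain ⟨a, ha⟩ := hClsNe j.val (by have := j.isLt; omega)
    rw [hClsmem] at ha
    exact ⟨a, (hkey a ha.1 j.val j.isLt).2 ha.2⟩
  · intro j a ha c hc b hab hbc
    simp only [Set.mem_setOf_eq] at ha hc ⊢
    rw [Fin.le_def] at hab hbc
    exact ⟨le_trans ha.1 hab, lt_of_le_of_lt hbc hc.2⟩
  · intro j j' hjj k hk k' hk'
    simp only [Set.mem_setOf_eq] at hk hk'
    rw [Fin.lt_def] at hjj ⊢
    have h1 : β (j.val + 1) ≤ β j'.val := hβmono (by omega)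
    have h2 := hk.2
    have h3 := hk'.1
    omega
  · ext b
    simp only [Set.mem_iUnion, Set.mem_setOf_eq, Set.mem_univ, iff_true]
    set g := Nat.findGreatest (fun j => β j ≤ b.val) (M - 1) with hgdef
    have hP0 : β 0 ≤ b.val := by rw [hβ0]; omega
    have hj1 : β g ≤ b.val := by
      rw [hgdef]
      exact Nat.findGreatest_spec (P := fun j => β j ≤ b.val) (m := 0) (by omega) hP0
    have hjle : g ≤ M - 1 := by rw [hgdef]; exact Nat.findGreatest_le _
    have hup : b.val < β (g + 1) := by
      rcases Nat.lt_or_ge g (M - 1) with h | h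
      · have hng := Nat.findGreatest_is_greatest (P := fun j => β j ≤ b.val) (n := M - 1)
          (k := g + 1) (by rw [hgdef]; omega) (by omega)
        omega
      · have hjeq : g + 1 = M := by omega
        rw [hjeq, hβM]
        exact b.isLt
    exact ⟨⟨g, by omega⟩, hj1, hup⟩
  · intro j
    constructor
    · obtain ⟨a, ha⟩ := hClsNe j.val (by have := j.isLt; omega)
      rw [hClsmem] at ha
      exact ⟨a, (hkey a ha.1 j.val j.isLt).2 ha.2, ha.1⟩
    · intro k hkJ hke
      simp only [Set.mem_setOf_eq] at hkJ
      have hρ := (hkey k hke j.val j.isLt).1 hkJ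
      rw [hpar k hke, hρ]
      simp

lemma lsigma_congr {n m : ℕ} {s s' : ℕ → ℝ} (h : ∀ j < m, s j = s' j) :
    Lsigma n m s = Lsigma n m s' := by
  have key : ∀ (u u' : ℕ → ℝ), (∀ j < m, u j = u' j) → Lsigma n m u ⊆ Lsigma n m u' := by
    intro u u' hu x hx
    obtain ⟨ht, e, a1, a2, J, h1, h2, h3, h4, h5⟩ := hx
    exact ⟨ht, e, a1, a2, J, h1, h2, h3, h4, fun j => ⟨(h5 j).1,
      fun k hk hke => by rw [← hu j.val j.isLt]; exact (h5 j).2 k hk hke⟩⟩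
  exact le_antisymm (key s s' h) (key s' s (fun j hj => (h j hj).symm))

lemma sign_cases {m m' : ℕ} {s s' : ℕ → ℝ} (hs : IsSignString m s) (hs' : IsSignString m' s') :
    s 0 = s' 0 ∨ s 0 = -(s' 0) := by
  rcases sign_vals hs with h1 | h1 <;> rcases sign_vals hs' with h2 | h2 <;> rw [h1, h2] <;> norm_num

lemma lsigma_unique {n m m' : ℕ} {s s' : ℕ → ℝ} {x : Fin n → ℝ}
    (hs : IsSignString m s) (hs' : IsSignString m' s')
    (hx : x ∈ Lsigma n m s) (hx' : x ∈ Lsigma n m' s') : m = m' ∧ s 0 = s' 0 := by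
  obtain ⟨e, hlev, hA, hB, hC⟩ := fwd hs hx
  obtain ⟨e', hlev', hA', hB', hC'⟩ := fwd hs' hx'
  have he : e' = e := level_unique hlev' hlev
  rw [he] at hA' hB' hC'
  rcases sign_cases hs hs' with hss | hss
  · refine ⟨?_, hss⟩
    by_contra hne
    rcases Nat.lt_or_ge m m' with h | h
    · exact hB (by rw [hss]; exact altc_mono hA' (by omega))
    · exact hB' (by rw [← hss]; exact altc_mono hA (by omega))
  · exfalso
    have h1 : m' < m := by
      by_contra h
      push_neg at h
      apply hC
      have hneg : -(s 0) = s' 0 := by rw [hss]; ring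
      rw [hneg]
      exact altc_mono hA' h
    have h2 : m < m' := by
      by_contra h
      push_neg at h
      apply hC'
      have hneg : -(s' 0) = s 0 := by rw [hss]
      rw [hneg]
      exact altc_mono hA h
    omega

lemma closure_sub {n m : ℕ} {s : ℕ → ℝ} (hs : IsSignString m s) :
    closure (Lsigma n m s) ⊆ Lsigma n m s ∪
      {x : Fin n → ℝ | ∃ m' : ℕ, ∃ s' : ℕ → ℝ,
        IsSignString m' s' ∧ m < m' ∧ x ∈ Lsigma n m' s'} := by
  classical
  intro x hx
  have hxlev : ∃ e, IsLevel n x e := by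
    have hsub : Lsigma n m s ⊆ {z : Fin n → ℝ | ∃ e, IsLevel n z e} :=
      fun y hy => exists_level_of_mem hy
    have := closure_mono hsub hx
    rwa [(isClosed_level n).closure_eq] at this
  obtain ⟨e, hlev⟩ := hxlev
  obtain ⟨M, sg, hsg, hxM⟩ := exists_canonical hlev
  obtain ⟨e2, hlev2, hAg, hBg, hCg⟩ := fwd hsg hxM
  have he2 : e2 = e := level_unique hlev2 hlev
  rw [he2] at hAg hBg hCg
  set O := Finset.univ.filter (fun k : Fin n => x k ≠ e) with hOdef
  set δ : ℝ := if hO : O.Nonempty then (O.image (fun k => |x k - e|)).min' (hO.image _) else 1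
    with hδdef
  have hδpos : 0 < δ := by
    rw [hδdef]
    split_ifs with hO
    · obtain ⟨v, hv1, hv2⟩ := Finset.mem_image.1 (Finset.min'_mem (O.image fun k => |x k - e|)
        (hO.image _))
      rw [← hv2]
      have hvne : x v ≠ e := by rw [hOdef] at hv1; simpa using hv1
      exact abs_pos.2 (sub_ne_zero.2 hvne)
    · norm_num
  have hδle : ∀ k : Fin n, x k ≠ e → δ ≤ |x k - e| := by
    intro k hk
    have hkO : k ∈ O := by rw [hOdef]; simp [hk]
    have hO : O.Nonempty := ⟨k, hkO⟩
    rw [hδdef, dif_pos hO]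
    exact Finset.min'_le _ _ (Finset.mem_image_of_mem _ hkO)
  have hδ : ∀ k, |x k - e| < δ → x k = e := by
    intro k h
    by_contra hne
    exact absurd h (not_lt.2 (hδle k hne))
  obtain ⟨y, hy, hdist⟩ := Metric.mem_closure_iff.1 hx (δ / 2) (by linarith)
  obtain ⟨ey, hylev, hAy, _, _⟩ := fwd hs hy
  have hcoord : ∀ k, |x k - y k| < δ / 2 := by
    intro k
    have h1 := dist_le_pi_dist x y k
    have h2 := lt_of_le_of_lt h1 hdist
    rwa [Real.dist_eq] at h2
  have hey : |ey - e| < δ / 2 := by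
    obtain ⟨ko, hko, hkoe⟩ := hlev.2.2.1
    obtain ⟨ke, hke, hkee⟩ := hlev.2.2.2
    have h1 : ey ≤ y ko := hylev.1 ko hko
    have h2 : y ke ≤ ey := hylev.2.1 ke hke
    have h3 := hcoord ko
    have h4 := hcoord ke
    rw [abs_lt] at h3 h4 ⊢
    constructor <;> [linarith [hkee]; linarith [hkoe]]
  have hAx : AltC n x e (s 0) m := by
    obtain ⟨c, hc, hcp⟩ := hAy
    refine ⟨c, hc, fun i => ⟨?_, (hcp i).2⟩⟩
    apply hδ
    have h1 := hcoord (c i)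
    have h2 := (hcp i).1
    rw [abs_lt] at h1 ⊢
    rw [abs_lt] at hey
    constructor <;> [linarith [h2]; linarith [h2]]
  rcases sign_cases hs hsg with hss | hss
  · have hmM : m ≤ M := by
      by_contra h
      push_neg at h
      exact hBg (by rw [← hss]; exact altc_mono hAx (by omega))
    rcases eq_or_lt_of_le hmM with hEq | hlt
    · left
      rw [lsigma_congr (s := s) (s' := sg) (fun j hj => by
        rw [sign_formula hs j hj, sign_formula hsg j (by omega), hss]), hEq]
      exact hxM
    · right
      exact ⟨M, sg, hsg, hlt, hxM⟩
  · right
    have hmM : m < M := by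
      by_contra h
      push_neg at h
      apply hCg
      have hneg : -(sg 0) = s 0 := by rw [hss]
      rw [hneg]
      exact altc_mono hAx h
    exact ⟨M, sg, hsg, hmM, hxM⟩

lemma sub_closure {n m m' : ℕ} {s s' : ℕ → ℝ}
    (hs : IsSignString m s) (hs' : IsSignString m' s') (hlt : m < m') :
    Lsigma n m' s' ⊆ closure (Lsigma n m s) := by
  classical
  intro x hx
  rw [Metric.mem_closure_iff]
  intro ε hε
  obtain ⟨ht, e, ha1, ha2, J, hJne, hJconv, hJord, hJcov, hJlev⟩ := hx
  have hlev : IsLevel n x e := level_of_tmin ht ha1 ha2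
  have hm2 : 2 ≤ m := hs.1
  have hs1 : s 1 = -(s 0) := hs.2.2 0 (by omega)
  set o : ℕ := if s 0 = s' 0 then 0 else 1 with hodef
  have hom : o + m ≤ m' := by rw [hodef]; split_ifs <;> omega
  have hsfact : ∀ i, i < m → s i = s' (o + i) := by
    intro i hi
    rw [hodef]
    split_ifs with h
    · rw [Nat.zero_add, sign_formula hs i hi, sign_formula hs' i (by omega), h]
    · have hcase : s 0 = -(s' 0) := by
        rcases sign_cases hs hs' with h1 | h1
        · exact absurd h1 h
        · exact h1
      rw [Nat.add_comm, sign_formula hs i hi, sign_formula hs' (i + 1) (by omega), hcase,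
        pow_succ]
      ring
  have hjOfEx : ∀ k : Fin n, ∃ j : Fin m', k ∈ J j := fun k =>
    Set.mem_iUnion.1 (hJcov ▸ Set.mem_univ k)
  choose jOf hjm using hjOfEx
  have hjuniq : ∀ (k : Fin n) (j : Fin m'), k ∈ J j → jOf k = j := by
    intro k j hk
    rcases lt_trichotomy (jOf k) j with h | h | h
    · exact absurd (hJord _ _ h k (hjm k) k hk) (lt_irrefl k)
    · exact h
    · exact absurd (hJord _ _ h k hk k (hjm k)) (lt_irrefl k)
  have hjmono : ∀ a b : Fin n, a ≤ b → jOf a ≤ jOf b := by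
    intro a b hab
    by_contra h
    push_neg at h
    exact absurd (lt_of_lt_of_le (hJord _ _ h b (hjm b) a (hjm a)) hab) (lt_irrefl b)
  set ε' := ε / 2 with hε'def
  have hεpos' : 0 < ε' := by rw [hε'def]; linarith
  set kept : Fin n → Prop := fun k => o ≤ (jOf k).val ∧ (jOf k).val < o + m with hkeptdef
  set y : Fin n → ℝ := fun k =>
    if x k = e ∧ ¬ kept k then (if Odd (k.val + 1) then e + ε' else e - ε') else x k with hydef
  have hy_eq : ∀ k, x k = e → kept k → y k = x k := by
    intro k h1 h2
    rw [hydef]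
    simp only []
    rw [if_neg (fun hc => hc.2 h2)]
  have hy_off : ∀ k, x k = e → ¬ kept k →
      y k = (if Odd (k.val + 1) then e + ε' else e - ε') := by
    intro k h1 h2
    rw [hydef]
    simp only []
    rw [if_pos ⟨h1, h2⟩]
  have hy_ne : ∀ k, x k ≠ e → y k = x k := by
    intro k h
    rw [hydef]
    simp only []
    rw [if_neg (fun hc => h hc.1)]
  choose rep hrepJ hrepE using fun i : Fin m =>
    (hJlev ⟨o + i.val, by have := i.isLt; omega⟩).1
  have hrepjOf : ∀ i : Fin m, jOf (rep i) = ⟨o + i.val, by have := i.isLt; omega⟩ :=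
    fun i => hjuniq _ _ (hrepJ i)
  have hrepkept : ∀ i : Fin m, kept (rep i) := by
    intro i
    rw [hkeptdef]
    simp only []
    rw [hrepjOf i]
    simp only [Fin.val_mk]
    have := i.isLt
    omega
  have hrepY : ∀ i : Fin m, y (rep i) = e := fun i => by
    rw [hy_eq _ (hrepE i) (hrepkept i), hrepE i]
  have hreppar : ∀ i : Fin m, (-1 : ℝ) ^ ((rep i).val + 1) = s i.val := by
    intro i
    rw [(hJlev ⟨o + i.val, by have := i.isLt; omega⟩).2 (rep i) (hrepJ i) (hrepE i)]
    exact (hsfact i.val i.isLt).symm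
  have hparodd : ∀ t : ℕ, ((-1 : ℝ)) ^ t = -1 → Odd t := by
    intro t h
    rcases Nat.even_or_odd t with h1 | h1
    · exfalso; rw [h1.neg_one_pow] at h; norm_num at h
    · exact h1
  have hpareven : ∀ t : ℕ, ((-1 : ℝ)) ^ t = 1 → Even t := by
    intro t h
    rcases Nat.even_or_odd t with h1 | h1
    · exact h1
    · exfalso; rw [h1.neg_one_pow] at h; norm_num at h
  have hattO : ∃ k : Fin n, Odd (k.val + 1) ∧ y k = e := by
    rcases sign_vals hs with h | h
    · refine ⟨rep ⟨1, by omega⟩, ?_, hrepY _⟩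
      apply hparodd
      rw [hreppar ⟨1, by omega⟩]
      rw [show ((⟨1, by omega⟩ : Fin m)).val = 1 from rfl, hs1, h]
    · refine ⟨rep ⟨0, by omega⟩, ?_, hrepY _⟩
      apply hparodd
      rw [hreppar ⟨0, by omega⟩]
      rw [show ((⟨0, by omega⟩ : Fin m)).val = 0 from rfl, h]
  have hattE : ∃ k : Fin n, Even (k.val + 1) ∧ y k = e := by
    rcases sign_vals hs with h | h
    · refine ⟨rep ⟨0, by omega⟩, ?_, hrepY _⟩
      apply hpareven
      rw [hreppar ⟨0, by omega⟩]
      rw [show ((⟨0, by omega⟩ : Fin m)).val = 0 from rfl, h]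
    · refine ⟨rep ⟨1, by omega⟩, ?_, hrepY _⟩
      apply hpareven
      rw [hreppar ⟨1, by omega⟩]
      rw [show ((⟨1, by omega⟩ : Fin m)).val = 1 from rfl, hs1, h]
      norm_num
  have hylev : IsLevel n y e := by
    refine ⟨?_, ?_, hattO, hattE⟩
    · intro k hk
      by_cases h1 : x k = e
      · by_cases h2 : kept k
        · rw [hy_eq k h1 h2, h1]
        · rw [hy_off k h1 h2, if_pos hk]; linarith
      · rw [hy_ne k h1]; exact hlev.1 k hk
    · intro k hk
      by_cases h1 : x k = e
      · by_cases h2 : kept k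
        · rw [hy_eq k h1 h2, h1]
        · rw [hy_off k h1 h2, if_neg (Nat.not_odd_iff_even.2 hk)]
          linarith
      · rw [hy_ne k h1]; exact hlev.2.1 k hk
  refine ⟨y, ⟨tmin_eq_zero_of_level hylev, e, hattO, hattE, fun i : Fin m =>
      {b : Fin n | (i.val = 0 ∨ o + i.val ≤ (jOf b).val) ∧
        (i.val = m - 1 ∨ (jOf b).val ≤ o + i.val)}, ?_, ?_, ?_, ?_, ?_⟩, ?_⟩
  · intro i
    refine ⟨rep i, ?_⟩
    simp only [Set.mem_setOf_eq]
    rw [hrepjOf i]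
    simp only [Fin.val_mk]
    omega
  · intro i a ha c hc b hab hbc
    simp only [Set.mem_setOf_eq] at ha hc ⊢
    have h1 := hjmono a b hab
    have h2 := hjmono b c hbc
    rw [Fin.le_def] at h1 h2
    constructor
    · rcases ha.1 with h | h
      · left; exact h
      · right; omega
    · rcases hc.2 with h | h
      · left; exact h
      · right; omega
  · intro i i' hii k hk k' hk'
    simp only [Set.mem_setOf_eq] at hk hk'
    rw [Fin.lt_def] at hii
    have hi'0 : i'.val ≠ 0 := by omega
    have him : i.val ≠ m - 1 := by have := i'.isLt; omega
    have h1 : (jOf k).val ≤ o + i.val := by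
      rcases hk.2 with h | h
      · exact absurd h him
      · exact h
    have h2 : o + i'.val ≤ (jOf k').val := by
      rcases hk'.1 with h | h
      · exact absurd h hi'0
      · exact h
    have h3 : jOf k < jOf k' := by rw [Fin.lt_def]; omega
    exact hJord _ _ h3 k (hjm k) k' (hjm k')
  · ext b
    simp only [Set.mem_iUnion, Set.mem_setOf_eq, Set.mem_univ, iff_true]
    by_cases h1 : (jOf b).val ≤ o
    · refine ⟨⟨0, by omega⟩, Or.inl rfl, Or.inr ?_⟩
      simp only [Fin.val_mk]
      omega
    · by_cases h2 : o + m - 1 ≤ (jOf b).val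
      · refine ⟨⟨m - 1, by omega⟩, Or.inr ?_, Or.inl rfl⟩
        simp only [Fin.val_mk]
        omega
      · refine ⟨⟨(jOf b).val - o, by omega⟩, Or.inr ?_, Or.inr ?_⟩ <;>
          (simp only [Fin.val_mk]; omega)
  · intro i
    constructor
    · refine ⟨rep i, ?_, hrepY i⟩
      simp only [Set.mem_setOf_eq]
      rw [hrepjOf i]
      simp only [Fin.val_mk]
      omega
    · intro k hkJ hky
      simp only [Set.mem_setOf_eq] at hkJ
      by_cases h1 : x k = e
      · by_cases h2 : kept k
        · have hk1 := h2
          rw [hkeptdef] at hk1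
          have hkk : (jOf k).val = o + i.val := by
            have hiLt := i.isLt
            rcases hkJ.1 with h | h <;> rcases hkJ.2 with h' | h' <;> omega
          rw [(hJlev (jOf k)).2 k (hjm k) h1, hkk]
          exact (hsfact i.val i.isLt).symm
        · exfalso
          rw [hy_off k h1 h2] at hky
          split_ifs at hky <;> linarith
      · exfalso
        rw [hy_ne k h1] at hky
        exact h1 hky
  · rw [dist_pi_lt_iff hε]
    intro k
    rw [Real.dist_eq]
    by_cases h1 : x k = e
    · by_cases h2 : kept k
      · rw [hy_eq k h1 h2]; simpa using hε
      · rw [hy_off k h1 h2, h1]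
        split_ifs
        · have hr : e - (e + ε') = -ε' := by ring
          rw [hr, abs_neg, abs_of_pos hεpos']
          rw [hε'def]; linarith
        · have hr : e - (e - ε') = ε' := by ring
          rw [hr, abs_of_pos hεpos']
          rw [hε'def]; linarith
    · rw [hy_ne k h1]
      simpa using hε

/-- The closure of `L_σ` is `L_σ ∪ ⋃_{|τ|>|σ|} L_τ`; in particular the closures of
`L_{σ^m}` and `L_{−σ^m}` intersect exactly in `⋃_{|τ|>m} L_τ`. -/
theorem stmt4 (n m : ℕ) (hn : 2 ≤ n) (hmn : m ≤ n) (s : ℕ → ℝ)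
    (hs : IsSignString m s) :
    closure (Lsigma n m s) =
      Lsigma n m s ∪
        {x : Fin n → ℝ | ∃ m' : ℕ, ∃ s' : ℕ → ℝ,
          IsSignString m' s' ∧ m < m' ∧ x ∈ Lsigma n m' s'} ∧
    closure (Lsigma n m (fun i => (-1 : ℝ) ^ (i + 1))) ∩
        closure (Lsigma n m (fun i => (-1 : ℝ) ^ i)) =
      {x : Fin n → ℝ | ∃ m' : ℕ, ∃ s' : ℕ → ℝ,
        IsSignString m' s' ∧ m < m' ∧ x ∈ Lsigma n m' s'} := by
  have hσ1 : IsSignString m (fun i => (-1 : ℝ) ^ (i + 1)) :=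
    ⟨hs.1, fun j _ => neg_one_pow_eq_or ℝ (j + 1), fun j _ => by
      simp only []
      rw [pow_succ]
      ring⟩
  have hσ2 : IsSignString m (fun i => (-1 : ℝ) ^ i) :=
    ⟨hs.1, fun j _ => neg_one_pow_eq_or ℝ j, fun j _ => by
      simp only []
      rw [pow_succ]
      ring⟩
  have part1 : ∀ (u : ℕ → ℝ), IsSignString m u → closure (Lsigma n m u) =
      Lsigma n m u ∪ {x : Fin n → ℝ | ∃ m' : ℕ, ∃ s' : ℕ → ℝ,
        IsSignString m' s' ∧ m < m' ∧ x ∈ Lsigma n m' s'} := by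
    intro u hu
    apply le_antisymm
    · exact closure_sub hu
    · intro x hx
      rcases hx with hx | hx
      · exact subset_closure hx
      · obtain ⟨m'', s'', hss'', hlt, hmem⟩ := hx
        exact sub_closure hu hss'' hlt hmem
  refine ⟨part1 s hs, ?_⟩
  apply Set.eq_of_subset_of_subset
  · intro x hx
    obtain ⟨hx1, hx2⟩ := hx
    rw [part1 _ hσ1] at hx1
    rw [part1 _ hσ2] at hx2
    rcases hx1 with h1 | h1
    · rcases hx2 with h2 | h2
      · exfalso
        have := (lsigma_unique hσ1 hσ2 h1 h2).2
        norm_num at this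
      · obtain ⟨m'', s'', hss, hlt, hmem⟩ := h2
        have := (lsigma_unique hσ1 hss h1 hmem).1
        omega
    · rcases hx2 with h2 | h2
      · obtain ⟨m'', s'', hss, hlt, hmem⟩ := h1
        have := (lsigma_unique hσ2 hss h2 hmem).1
        omega
      · exact h1
  · intro x hx
    obtain ⟨m'', s'', hss, hlt, hmem⟩ := hx
    exact ⟨sub_closure hσ1 hss hlt hmem, sub_closure hσ2 hss hlt hmem⟩
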